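/- Let R be a discrete valuation ring with uniformizer π, fraction field K and residue field κ. Let M_1, M_2 be finite free R-modules equipped with R-linear endomorphisms θ_1, θ_2 respectively, and suppose there is a K-linear isomorphism α : M_1 ⊗_R K → M_2 ⊗_R K with α ∘ θ_1 = θ_2 ∘ α. Suppose moreover that every nonzero κ-linear map β : M_1 ⊗ κ → M_2 ⊗ κ satisfying β ∘ θ̄_1 = θ̄_2 ∘ β is an isomorphism. Then there exists an R-linear isomorphism α' : M_1 → M_2 with α' ∘ θ_1 = θ_2 ∘ α'. -/

import Mathlib

open TensorProduct Pointwise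

private lemma aux_inj (R : Type) [CommRing R] [IsDomain R]
    (K : Type) [Field K] [Algebra R K] [IsFractionRing R K]
    (M : Type) [AddCommGroup M] [Module R M] [Module.Free R M] :
    Function.Injective (TensorProduct.mk R K M 1) := by
  haveI : IsLocalizedModule (nonZeroDivisors R) (TensorProduct.mk R K M 1) :=
    (isLocalizedModule_iff_isBaseChange (nonZeroDivisors R) K _).mpr
      (TensorProduct.isBaseChange R M K)
  intro x y hxy
  have h : (TensorProduct.mk R K M 1) (x - y) = 0 := by rw [map_sub, hxy, sub_self]
  obtain ⟨s, hs⟩ := (IsLocalizedModule.eq_zero_iff (nonZeroDivisors R) _).mp h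
  rw [Submonoid.smul_def] at hs
  rcases smul_eq_zero.mp hs with h' | h'
  · exact absurd h' (nonZeroDivisors.coe_ne_zero s)
  · exact sub_eq_zero.mp h'

private lemma aux_div {R M₁ M₂ : Type} [CommRing R] [AddCommGroup M₁] [Module R M₁]
    [AddCommGroup M₂] [Module R M₂] {ι : Type} [Fintype ι] (b : Module.Basis ι R M₁)
    (π : R) (f : M₁ →ₗ[R] M₂)
    (h : LinearMap.baseChange (R ⧸ Ideal.span {π}) f = 0) :
    ∃ f' : M₁ →ₗ[R] M₂, f = π • f' := by
  classical
  have hmem : ∀ x : M₁, ∃ z : M₂, π • z = f x := by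
    intro x
    set I := Ideal.span ({π} : Set R)
    have h1 : (1 : R ⧸ I) ⊗ₜ[R] (f x) = 0 := by
      have := LinearMap.congr_fun h ((1 : R ⧸ I) ⊗ₜ[R] x)
      simpa [LinearMap.baseChange_tmul] using this
    have h2 : TensorProduct.quotTensorEquivQuotSMul M₂ I ((Ideal.Quotient.mk I 1) ⊗ₜ[R] f x)
        = Submodule.Quotient.mk ((1:R) • f x) :=
      TensorProduct.quotTensorEquivQuotSMul_mk_tmul I 1 (f x)
    rw [show ((Ideal.Quotient.mk I 1 : R ⧸ I)) = 1 from map_one _, h1, map_zero, one_smul] at h2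
    have hx : f x ∈ I • (⊤ : Submodule R M₂) := (Submodule.Quotient.mk_eq_zero _).mp h2.symm
    rw [Submodule.ideal_span_singleton_smul] at hx
    have : f x ∈ π • ((⊤ : Submodule R M₂) : Set M₂) := hx
    obtain ⟨z, -, hz⟩ := this
    exact ⟨z, hz⟩
  choose z hz using hmem
  refine ⟨b.constr ℕ (fun i => z (b i)), ?_⟩
  apply b.ext
  intro i
  rw [LinearMap.smul_apply, Module.Basis.constr_basis, hz]

/-- Module-theoretic core of Langton's lemma over a DVR: an isomorphism over the
fraction field intertwining `θ₁, θ₂`, together with the property that any nonzero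
intertwining map over the residue field is an isomorphism, yields an integral
intertwining isomorphism. -/
theorem stmt12 (R : Type) [CommRing R] [IsDomain R] [IsDiscreteValuationRing R]
    (π : R) (hπ : Irreducible π)
    (K : Type) [Field K] [Algebra R K] [IsFractionRing R K]
    (M₁ M₂ : Type) [AddCommGroup M₁] [Module R M₁] [Module.Free R M₁] [Module.Finite R M₁]
    [AddCommGroup M₂] [Module R M₂] [Module.Free R M₂] [Module.Finite R M₂]
    (θ₁ : M₁ →ₗ[R] M₁) (θ₂ : M₂ →ₗ[R] M₂)
    (α : (K ⊗[R] M₁) ≃ₗ[K] (K ⊗[R] M₂))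
    (hα : ∀ x, α (LinearMap.baseChange K θ₁ x) = LinearMap.baseChange K θ₂ (α x))
    (hβ : ∀ β : ((R ⧸ Ideal.span {π}) ⊗[R] M₁) →ₗ[R ⧸ Ideal.span {π}]
        ((R ⧸ Ideal.span {π}) ⊗[R] M₂),
      β ≠ 0 →
      (∀ x, β (LinearMap.baseChange (R ⧸ Ideal.span {π}) θ₁ x) =
        LinearMap.baseChange (R ⧸ Ideal.span {π}) θ₂ (β x)) →
      Function.Bijective β) :
    ∃ α' : M₁ ≃ₗ[R] M₂, ∀ x, α' (θ₁ x) = θ₂ (α' x) := by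
  classical
  have hj₁ := aux_inj R K M₁
  have hj₂ := aux_inj R K M₂
  rcases subsingleton_or_nontrivial M₁ with hsub | hnt
  · -- trivial case
    haveI : Subsingleton (K ⊗[R] M₁) := by
      have hz : ∀ z : K ⊗[R] M₁, z = 0 := fun z => by
        induction z using TensorProduct.induction_on with
        | zero => rfl
        | tmul k m => rw [Subsingleton.elim m 0, TensorProduct.tmul_zero]
        | add x y hx hy => rw [hx, hy, add_zero]
      exact ⟨fun a b => by rw [hz a, hz b]⟩
    haveI : Subsingleton (K ⊗[R] M₂) := α.symm.injective.subsingleton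
    haveI : Subsingleton M₂ := hj₂.subsingleton
    haveI : Subsingleton M₁ := hsub
    exact ⟨LinearEquiv.ofSubsingleton _ _, fun x => Subsingleton.elim _ _⟩
  · -- main case
    obtain ⟨x₀, hx₀⟩ := exists_ne (0 : M₁)
    set Q := R ⧸ Ideal.span ({π} : Set R) with hQdef
    let ι₁ := Module.Free.ChooseBasisIndex R M₁
    let ι₂ := Module.Free.ChooseBasisIndex R M₂
    let b₁ : Module.Basis ι₁ R M₁ := Module.Free.chooseBasis R M₁
    let b₂ : Module.Basis ι₂ R M₂ := Module.Free.chooseBasis R M₂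
    let g : M₁ →ₗ[R] K ⊗[R] M₂ :=
      (α.toLinearMap.restrictScalars R) ∘ₗ (TensorProduct.mk R K M₁ 1)
    have hgapp : ∀ x, g x = α ((1:K) ⊗ₜ[R] x) := fun x => rfl
    haveI : IsLocalizedModule (nonZeroDivisors R) (TensorProduct.mk R K M₂ 1) :=
      (isLocalizedModule_iff_isBaseChange (nonZeroDivisors R) K _).mpr
        (TensorProduct.isBaseChange R M₂ K)
    -- Step A: clear denominators
    have stepA : ∃ (f : M₁ →ₗ[R] M₂) (c : K), c ≠ 0 ∧
        ∀ x, TensorProduct.mk R K M₂ 1 (f x) = c • g x := by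
      choose p hp using fun i : ι₁ =>
        IsLocalizedModule.surj (nonZeroDivisors R) (TensorProduct.mk R K M₂ 1) (g (b₁ i))
      set s : R := ∏ i, ((p i).2 : R) with hsdef
      have hs0 : s ≠ 0 := by
        rw [hsdef]
        exact Finset.prod_ne_zero_iff.mpr fun i _ => nonZeroDivisors.coe_ne_zero _
      refine ⟨b₁.constr ℕ
        (fun i => (∏ j ∈ Finset.univ.erase i, ((p j).2 : R)) • (p i).1),
        algebraMap R K s, ?_, ?_⟩
      · exact (map_ne_zero_iff _ (IsFractionRing.injective R K)).mpr hs0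
      · have hmap : (TensorProduct.mk R K M₂ 1) ∘ₗ (b₁.constr ℕ
            (fun i => (∏ j ∈ Finset.univ.erase i, ((p j).2 : R)) • (p i).1))
            = (algebraMap R K s) • g := by
          apply b₁.ext
          intro i
          rw [LinearMap.comp_apply, Module.Basis.constr_basis, map_smul, LinearMap.smul_apply,
            ← hp i, Submonoid.smul_def, smul_smul, Finset.prod_erase_mul _ _ (Finset.mem_univ i),
            ← hsdef, algebraMap_smul]
        intro x
        have := LinearMap.congr_fun hmap x
        rw [LinearMap.comp_apply, LinearMap.smul_apply] at this
        exact this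
    -- key step: a map with nonzero reduction mod π
    have hπK : algebraMap R K π ≠ 0 :=
      (map_ne_zero_iff _ (IsFractionRing.injective R K)).mpr hπ.ne_zero
    have key : ∃ (f : M₁ →ₗ[R] M₂) (c : K), c ≠ 0 ∧
        (∀ x, TensorProduct.mk R K M₂ 1 (f x) = c • g x) ∧
        LinearMap.baseChange Q f ≠ 0 := by
      by_contra hcon
      push_neg at hcon
      obtain ⟨f₀, c₀, hc₀, hf₀⟩ := stepA
      have desc : ∀ k : ℕ, ∃ (f : M₁ →ₗ[R] M₂) (c : K), c ≠ 0 ∧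
          (∀ x, TensorProduct.mk R K M₂ 1 (f x) = c • g x) ∧ f₀ = π ^ k • f := by
        intro k
        induction k with
        | zero => exact ⟨f₀, c₀, hc₀, hf₀, by rw [pow_zero, one_smul]⟩
        | succ k ih =>
          obtain ⟨f, c, hc, hfc, hdiv⟩ := ih
          obtain ⟨f', hf'⟩ := aux_div b₁ π f (hcon f c hc hfc)
          refine ⟨f', (algebraMap R K π)⁻¹ * c, mul_ne_zero (inv_ne_zero hπK) hc, ?_, ?_⟩
          · intro x
            have h1 : (algebraMap R K π) • (TensorProduct.mk R K M₂ 1 (f' x)) = c • g x := by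
              rw [algebraMap_smul, ← map_smul, ← LinearMap.smul_apply, ← hf', hfc]
            calc TensorProduct.mk R K M₂ 1 (f' x)
                = (algebraMap R K π)⁻¹ • ((algebraMap R K π) •
                    TensorProduct.mk R K M₂ 1 (f' x)) := (inv_smul_smul₀ hπK _).symm
              _ = (algebraMap R K π)⁻¹ • (c • g x) := by rw [h1]
              _ = ((algebraMap R K π)⁻¹ * c) • g x := (smul_smul _ _ _)
          · rw [hdiv, hf', smul_smul, ← pow_succ]
      -- termination via valuations of a nonzero coordinate
      have hf₀x : f₀ x₀ ≠ 0 := by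
        intro h0
        have h1 : c₀ • g x₀ = 0 := by rw [← hf₀ x₀, h0, map_zero]
        have hg : g x₀ = 0 := by
          rcases smul_eq_zero.mp h1 with h | h
          · exact absurd h hc₀
          · exact h
        have h2 : (1:K) ⊗ₜ[R] x₀ = 0 := by
          apply α.injective
          rw [map_zero, ← hgapp x₀, hg]
        exact hx₀ (hj₁ (by rw [show TensorProduct.mk R K M₁ 1 x₀ = (1:K) ⊗ₜ[R] x₀ from rfl,
          h2, map_zero]))
      obtain ⟨i, hi⟩ : ∃ i, b₂.repr (f₀ x₀) i ≠ 0 := by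
        by_contra hA
        push_neg at hA
        have hA' : b₂.repr (f₀ x₀) = 0 := Finsupp.ext fun a => by simp [hA a]
        exact hf₀x (by simpa using congrArg b₂.repr.symm hA')
      set r := b₂.repr (f₀ x₀) i with hrdef
      have hdvd : ∀ k, π ^ k ∣ r := by
        intro k
        obtain ⟨f, c, -, -, hdiv⟩ := desc k
        refine ⟨b₂.repr (f x₀) i, ?_⟩
        have h3 : f₀ x₀ = π ^ k • f x₀ := by rw [hdiv]; rfl
        rw [hrdef, h3, map_smul, Finsupp.smul_apply, smul_eq_mul]
      obtain ⟨n, u, hu⟩ := IsDiscreteValuationRing.eq_unit_mul_pow_irreducible hi hπ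
      have h4 : π ^ n * π ∣ π ^ n * (u : R) := by
        have h5 := hdvd (n + 1)
        rw [hu, pow_succ] at h5
        rwa [mul_comm ((u : R)) _] at h5
      have h6 : π ∣ (u : R) := (mul_dvd_mul_iff_left (pow_ne_zero n hπ.ne_zero)).mp h4
      exact hπ.not_isUnit (isUnit_of_dvd_unit h6 u.isUnit)
    obtain ⟨f, c, hc, hfc, hfbar⟩ := key
    -- f intertwines θ₁, θ₂
    have hint : ∀ x, f (θ₁ x) = θ₂ (f x) := by
      intro x
      apply hj₂
      show TensorProduct.mk R K M₂ 1 (f (θ₁ x)) = TensorProduct.mk R K M₂ 1 (θ₂ (f x))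
      have e1 : g (θ₁ x) = LinearMap.baseChange K θ₂ (g x) := by
        rw [hgapp, hgapp, show (1:K) ⊗ₜ[R] θ₁ x = LinearMap.baseChange K θ₁ ((1:K) ⊗ₜ[R] x)
          from (LinearMap.baseChange_tmul θ₁ 1 x).symm, hα]
      have e2 : TensorProduct.mk R K M₂ 1 (θ₂ (f x))
          = LinearMap.baseChange K θ₂ (TensorProduct.mk R K M₂ 1 (f x)) := by
        exact (LinearMap.baseChange_tmul θ₂ 1 (f x)).symm
      rw [hfc (θ₁ x), e1, e2, hfc x, map_smul]
    -- reduction mod π is bijective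
    have hcomm : ∀ x, (LinearMap.baseChange Q f) (LinearMap.baseChange Q θ₁ x) =
        LinearMap.baseChange Q θ₂ ((LinearMap.baseChange Q f) x) := by
      have hcomp : f ∘ₗ θ₁ = θ₂ ∘ₗ f := LinearMap.ext hint
      intro x
      have h7 := congrArg (LinearMap.baseChange Q) hcomp
      rw [LinearMap.baseChange_comp, LinearMap.baseChange_comp] at h7
      exact LinearMap.congr_fun h7 x
    have hbij : Function.Bijective (LinearMap.baseChange Q f) :=
      hβ (LinearMap.baseChange Q f) hfbar hcomm
    haveI : Nontrivial Q := Ideal.Quotient.nontrivial_iff.mpr (by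
      rw [Ne, Ideal.span_singleton_eq_top]; exact hπ.not_isUnit)
    let b₁Q : Module.Basis ι₁ Q (Q ⊗[R] M₁) := Algebra.TensorProduct.basis Q b₁
    let b₂Q : Module.Basis ι₂ Q (Q ⊗[R] M₂) := Algebra.TensorProduct.basis Q b₂
    let E : (Q ⊗[R] M₁) ≃ₗ[Q] (Q ⊗[R] M₂) := LinearEquiv.ofBijective _ hbij
    let e : ι₂ ≃ ι₁ := Module.Basis.indexEquiv b₂Q (b₁Q.map E)
    let b₂' : Module.Basis ι₁ R M₂ := b₂.reindex e
    let b₂'Q : Module.Basis ι₁ Q (Q ⊗[R] M₂) := Algebra.TensorProduct.basis Q b₂'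
    have hdet : IsUnit (algebraMap R Q (LinearMap.toMatrix b₁ b₂' f).det) := by
      have h1 : LinearMap.toMatrix b₁Q b₂'Q (LinearMap.baseChange Q f)
          = (LinearMap.toMatrix b₁ b₂' f).map (algebraMap R Q) :=
        LinearMap.toMatrix_baseChange Q f b₁ b₂'
      have h2 : IsUnit (LinearMap.toMatrix b₁Q b₂'Q E.toLinearMap).det :=
        LinearEquiv.isUnit_det E b₁Q b₂'Q
      rw [show E.toLinearMap = LinearMap.baseChange Q f from rfl, h1] at h2
      rwa [RingHom.map_det]
    have hunit : IsUnit (LinearMap.toMatrix b₁ b₂' f).det := by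
      by_contra hnu
      have hmem : (LinearMap.toMatrix b₁ b₂' f).det ∈ Ideal.span ({π} : Set R) := by
        rw [← (IsDiscreteValuationRing.irreducible_iff_uniformizer π).mp hπ]
        exact hnu
      have hz : algebraMap R Q (LinearMap.toMatrix b₁ b₂' f).det = 0 :=
        (Ideal.Quotient.eq_zero_iff_mem).mpr hmem
      rw [hz] at hdet
      exact zero_ne_one ((isUnit_zero_iff.mp hdet))
    refine ⟨LinearEquiv.ofIsUnitDet hunit, fun x => ?_⟩
    rw [LinearEquiv.ofIsUnitDet_apply, LinearEquiv.ofIsUnitDet_apply]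
    exact hint x
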